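/- (Boundedness of the WVD-QOLCT, Theorem 3.2) For all f, g ∈ L²(ℝ²,ℍ) and all t = (t₁,t₂), u = (u₁,u₂) ∈ ℝ², the quaternion norm of the WVD-QOLCT satisfies |W^{A₁,A₂}_{f,g}(t,u)| ≤ (2/(π·√(b₁·b₂))) · ‖f‖ · ‖g‖. -/

import Mathlib

open MeasureTheory Real

noncomputable section

/-- The real quaternions. -/
abbrev ℍ := Quaternion ℝ

/-- The imaginary unit `i`. -/
def qi : ℍ := ⟨0, 1, 0, 0⟩

/-- The imaginary unit `j`. -/
def qj : ℍ := ⟨0, 0, 1, 0⟩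

/-- The quaternion exponential. -/
def qexp (q : ℍ) : ℍ := NormedSpace.exp q

/-- A parameter tuple `A = (a, b, c, d, r, s)` for the offset linear canonical transform. -/
structure OLCT where
  a : ℝ
  b : ℝ
  c : ℝ
  d : ℝ
  r : ℝ
  s : ℝ

/-- The QOLCT kernel `K^e_A(t, u)` with imaginary unit `e`:
`(1/√(2π b)) · exp(−e π/4) · exp((e/(2b)) (a t² + 2t(r−u) − 2u(dr − bs) + d u² + d r²))`. -/
def kernelK (P : OLCT) (e : ℍ) (t u : ℝ) : ℍ :=
  ((Real.sqrt (2 * Real.pi * P.b))⁻¹ : ℝ) •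
    (qexp ((-(Real.pi / 4)) • e) *
      qexp (((1 / (2 * P.b)) *
        (P.a * t ^ 2 + 2 * t * (P.r - u) - 2 * u * (P.d * P.r - P.b * P.s)
          + P.d * u ^ 2 + P.d * P.r ^ 2)) • e))

/-- The Wigner–Ville distribution associated with the two-sided QOLCT:
`W^{A₁,A₂}_{f,g}(t,u) = ∫ K^i_{A₁}(n₁,u₁) f(t+n/2) conj(g(t−n/2)) K^j_{A₂}(n₂,u₂) dn`. -/
def WVD (P1 P2 : OLCT) (f g : ℝ × ℝ → ℍ) (t u : ℝ × ℝ) : ℍ :=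
  ∫ n : ℝ × ℝ,
    kernelK P1 qi n.1 u.1 * f (t + n / 2) * star (g (t - n / 2)) * kernelK P2 qj n.2 u.2

/-- The `L²` norm `‖f‖ = (∫ |f(x)|² dx)^{1/2}` of `f : ℝ² → ℍ`. -/
def L2norm (f : ℝ × ℝ → ℍ) : ℝ := Real.sqrt (∫ x : ℝ × ℝ, ‖f x‖ ^ 2)

open scoped ENNReal

lemma norm_kernelK (P : OLCT) (e : ℍ) (he : e.re = 0) (t u : ℝ) :
    ‖kernelK P e t u‖ = (Real.sqrt (2 * Real.pi * P.b))⁻¹ := by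
  unfold kernelK qexp
  rw [norm_smul, norm_mul, Quaternion.norm_exp, Quaternion.norm_exp]
  simp [he, Real.norm_eq_abs, abs_of_nonneg (Real.sqrt_nonneg _)]

lemma map_affine (t : ℝ × ℝ) (r : ℝ) (hr : r ≠ 0) :
    Measure.map (fun n : ℝ × ℝ => t + r • n) volume
      = ENNReal.ofReal |(r ^ 2)⁻¹| • volume := by
  have h1 : (fun n : ℝ × ℝ => t + r • n)
      = (fun x : ℝ × ℝ => t + x) ∘ (fun n : ℝ × ℝ => r • n) := rfl
  have hfr : Module.finrank ℝ (ℝ × ℝ) = 2 := by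
    simp [Module.finrank_prod]
  rw [h1, ← Measure.map_map (measurable_const_add t) (measurable_const_smul r),
    MeasureTheory.Measure.map_addHaar_smul (volume : Measure (ℝ × ℝ)) hr,
    Measure.map_smul, hfr]
  congr 1
  exact map_add_left_eq_self volume t

lemma affine_ac (t : ℝ × ℝ) (r : ℝ) (hr : r ≠ 0) :
    Measure.map (fun n : ℝ × ℝ => t + r • n) volume ≪ volume := by
  rw [map_affine t r hr]
  intro s hs
  simp [Measure.smul_apply, hs]

lemma lintegral_affine (t : ℝ × ℝ) (r : ℝ) (hr : r ≠ 0) (h : ℝ × ℝ → ℝ≥0∞)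
    (hh : AEMeasurable h volume) :
    ∫⁻ n : ℝ × ℝ, h (t + r • n) = ENNReal.ofReal |(r ^ 2)⁻¹| * ∫⁻ x, h x := by
  have hT : Measurable fun n : ℝ × ℝ => t + r • n :=
    (measurable_const_smul r).const_add t
  rw [← lintegral_map' (hh.mono' (affine_ac t r hr)) hT.aemeasurable,
    map_affine t r hr, lintegral_smul_measure, smul_eq_mul]

/-- **Boundedness of the WVD-QOLCT (Theorem 3.2).** -/
theorem wvd_qolct_bounded (P1 P2 : OLCT)
    (hA1 : P1.a * P1.d - P1.b * P1.c = 1) (hb1 : 0 < P1.b)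
    (hA2 : P2.a * P2.d - P2.b * P2.c = 1) (hb2 : 0 < P2.b)
    (f g : ℝ × ℝ → ℍ) (hf : MemLp f 2 volume) (hg : MemLp g 2 volume)
    (t u : ℝ × ℝ) :
    ‖WVD P1 P2 f g t u‖ ≤
      2 / (Real.pi * Real.sqrt (P1.b * P2.b)) * L2norm f * L2norm g := by
  classical
  set c1 : ℝ := (Real.sqrt (2 * Real.pi * P1.b))⁻¹ with hc1
  set c2 : ℝ := (Real.sqrt (2 * Real.pi * P2.b))⁻¹ with hc2
  have hc1nn : 0 ≤ c1 := inv_nonneg.2 (Real.sqrt_nonneg _)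
  have hc2nn : 0 ≤ c2 := inv_nonneg.2 (Real.sqrt_nonneg _)
  -- rewrite the translations in affine form
  have hdiv : ∀ n : ℝ × ℝ, t + n / 2 = t + (2⁻¹ : ℝ) • n := by
    intro n
    ext <;> simp [Prod.fst_div, Prod.snd_div, div_eq_inv_mul]
  have hdiv' : ∀ n : ℝ × ℝ, t - n / 2 = t + (-2⁻¹ : ℝ) • n := by
    intro n
    ext <;> simp [Prod.fst_div, Prod.snd_div, div_eq_inv_mul] <;> ring
  -- ℝ≥0∞-valued squared norms
  set Nf : ℝ≥0∞ := ∫⁻ x : ℝ × ℝ, (‖f x‖₊ : ℝ≥0∞) ^ (2 : ℝ) with hNf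
  set Ng : ℝ≥0∞ := ∫⁻ x : ℝ × ℝ, (‖g x‖₊ : ℝ≥0∞) ^ (2 : ℝ) with hNg
  have hsqf : ∀ x : ℝ × ℝ, (‖f x‖₊ : ℝ≥0∞) ^ (2 : ℝ) = ENNReal.ofReal (‖f x‖ ^ 2) := by
    intro x
    rw [ENNReal.ofReal_pow (norm_nonneg _), ofReal_norm, enorm_eq_nnnorm,
      ← ENNReal.rpow_natCast]
    norm_num
  have hsqg : ∀ x : ℝ × ℝ, (‖g x‖₊ : ℝ≥0∞) ^ (2 : ℝ) = ENNReal.ofReal (‖g x‖ ^ 2) := by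
    intro x
    rw [ENNReal.ofReal_pow (norm_nonneg _), ofReal_norm, enorm_eq_nnnorm,
      ← ENNReal.rpow_natCast]
    norm_num
  -- finiteness
  have hNf_lt : Nf < ∞ := by
    have := hf.2
    rw [eLpNorm_eq_lintegral_rpow_enorm_toReal (by norm_num) (by norm_num)] at this
    simp only [ENNReal.toReal_ofNat] at this
    rw [ENNReal.rpow_lt_top_iff_of_pos (by norm_num : (0:ℝ) < 1/2)] at this
    exact this
  have hNg_lt : Ng < ∞ := by
    have := hg.2
    rw [eLpNorm_eq_lintegral_rpow_enorm_toReal (by norm_num) (by norm_num)] at this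
    simp only [ENNReal.toReal_ofNat] at this
    rw [ENNReal.rpow_lt_top_iff_of_pos (by norm_num : (0:ℝ) < 1/2)] at this
    exact this
  -- measurability
  have hfmeas : AEMeasurable (fun x : ℝ × ℝ => (‖f x‖₊ : ℝ≥0∞)) volume :=
    hf.1.enorm
  have hgmeas : AEMeasurable (fun x : ℝ × ℝ => (‖g x‖₊ : ℝ≥0∞)) volume :=
    hg.1.enorm
  have hF : AEMeasurable (fun n : ℝ × ℝ => (‖f (t + (2⁻¹:ℝ) • n)‖₊ : ℝ≥0∞)) volume :=
    hfmeas.comp_quasiMeasurePreserving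
      ⟨(measurable_const_smul _).const_add t, affine_ac t _ (by norm_num)⟩
  have hG : AEMeasurable (fun n : ℝ × ℝ => (‖g (t + (-2⁻¹:ℝ) • n)‖₊ : ℝ≥0∞)) volume :=
    hgmeas.comp_quasiMeasurePreserving
      ⟨(measurable_const_smul _).const_add t, affine_ac t _ (by norm_num)⟩
  -- step 1 : bound by a lintegral
  have step1 : ‖WVD P1 P2 f g t u‖ ≤
      (∫⁻ n : ℝ × ℝ, ENNReal.ofReal
        ‖kernelK P1 qi n.1 u.1 * f (t + n / 2) * star (g (t - n / 2)) *
          kernelK P2 qj n.2 u.2‖).toReal :=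
    norm_integral_le_lintegral_norm _
  -- pointwise computation
  have hpt : ∀ n : ℝ × ℝ, ENNReal.ofReal
      ‖kernelK P1 qi n.1 u.1 * f (t + n / 2) * star (g (t - n / 2)) *
        kernelK P2 qj n.2 u.2‖
      = ENNReal.ofReal (c1 * c2) *
          ((‖f (t + (2⁻¹:ℝ) • n)‖₊ : ℝ≥0∞) * (‖g (t + (-2⁻¹:ℝ) • n)‖₊ : ℝ≥0∞)) := by
    intro n
    have hk1 : ‖kernelK P1 qi n.1 u.1‖ = c1 := norm_kernelK P1 qi rfl _ _
    have hk2 : ‖kernelK P2 qj n.2 u.2‖ = c2 := norm_kernelK P2 qj rfl _ _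
    rw [norm_mul, norm_mul, norm_mul, norm_star, hk1, hk2, hdiv n, hdiv' n]
    rw [show ENNReal.ofReal (c1 * c2) = ENNReal.ofReal c1 * ENNReal.ofReal c2 from
      ENNReal.ofReal_mul hc1nn]
    rw [ENNReal.ofReal_mul (by positivity), ENNReal.ofReal_mul (by positivity),
      ENNReal.ofReal_mul hc1nn, ofReal_norm, ofReal_norm, enorm_eq_nnnorm, enorm_eq_nnnorm]
    ring
  -- Hölder
  have holder : (∫⁻ n : ℝ × ℝ,
        (‖f (t + (2⁻¹:ℝ) • n)‖₊ : ℝ≥0∞) * (‖g (t + (-2⁻¹:ℝ) • n)‖₊ : ℝ≥0∞))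
      ≤ (4 * Nf) ^ (1/2 : ℝ) * (4 * Ng) ^ (1/2 : ℝ) := by
    have conj : (2:ℝ).HolderConjugate 2 := Real.HolderConjugate.two_two
    have := ENNReal.lintegral_mul_le_Lp_mul_Lq volume conj hF hG
    refine this.trans_eq ?_
    have e1 : (∫⁻ n : ℝ × ℝ, (‖f (t + (2⁻¹:ℝ) • n)‖₊ : ℝ≥0∞) ^ (2:ℝ)) = 4 * Nf := by
      rw [lintegral_affine t (2⁻¹:ℝ) (by norm_num)
        (fun x => (‖f x‖₊ : ℝ≥0∞) ^ (2:ℝ)) (hfmeas.pow_const _), ← hNf]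
      norm_num
    have e2 : (∫⁻ n : ℝ × ℝ, (‖g (t + (-2⁻¹:ℝ) • n)‖₊ : ℝ≥0∞) ^ (2:ℝ)) = 4 * Ng := by
      rw [lintegral_affine t (-2⁻¹:ℝ) (by norm_num)
        (fun x => (‖g x‖₊ : ℝ≥0∞) ^ (2:ℝ)) (hgmeas.pow_const _), ← hNg]
      norm_num
    rw [e1, e2]
  -- assemble the ℝ≥0∞ bound
  have step2 : (∫⁻ n : ℝ × ℝ, ENNReal.ofReal
      ‖kernelK P1 qi n.1 u.1 * f (t + n / 2) * star (g (t - n / 2)) *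
        kernelK P2 qj n.2 u.2‖)
      ≤ ENNReal.ofReal (c1 * c2) * ((4 * Nf) ^ (1/2 : ℝ) * (4 * Ng) ^ (1/2 : ℝ)) := by
    calc (∫⁻ n : ℝ × ℝ, ENNReal.ofReal
        ‖kernelK P1 qi n.1 u.1 * f (t + n / 2) * star (g (t - n / 2)) *
          kernelK P2 qj n.2 u.2‖)
        = ∫⁻ n : ℝ × ℝ, ENNReal.ofReal (c1 * c2) *
            ((‖f (t + (2⁻¹:ℝ) • n)‖₊ : ℝ≥0∞) * (‖g (t + (-2⁻¹:ℝ) • n)‖₊ : ℝ≥0∞)) :=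
          lintegral_congr hpt
      _ = ENNReal.ofReal (c1 * c2) * ∫⁻ n : ℝ × ℝ,
            ((‖f (t + (2⁻¹:ℝ) • n)‖₊ : ℝ≥0∞) * (‖g (t + (-2⁻¹:ℝ) • n)‖₊ : ℝ≥0∞)) :=
          lintegral_const_mul' _ _ ENNReal.ofReal_ne_top
      _ ≤ _ := by exact mul_le_mul_right holder _
  -- identify L2 norms
  have hL2f : L2norm f = (Nf ^ (1/2 : ℝ)).toReal := by
    rw [L2norm, ← ENNReal.toReal_rpow, ← Real.sqrt_eq_rpow]
    congr 1
    rw [integral_eq_lintegral_of_nonneg_ae (ae_of_all _ fun x => sq_nonneg _)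
      ((hf.1.norm.aemeasurable.pow_const 2).aestronglyMeasurable)]
    congr 1
    exact lintegral_congr fun x => (hsqf x).symm
  have hL2g : L2norm g = (Ng ^ (1/2 : ℝ)).toReal := by
    rw [L2norm, ← ENNReal.toReal_rpow, ← Real.sqrt_eq_rpow]
    congr 1
    rw [integral_eq_lintegral_of_nonneg_ae (ae_of_all _ fun x => sq_nonneg _)
      ((hg.1.norm.aemeasurable.pow_const 2).aestronglyMeasurable)]
    congr 1
    exact lintegral_congr fun x => (hsqg x).symm
  -- the right-hand side value
  have hfour : ∀ X : ℝ≥0∞, (4 * X) ^ (1/2 : ℝ) = 2 * X ^ (1/2 : ℝ) := by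
    intro X
    rw [ENNReal.mul_rpow_of_nonneg _ _ (by norm_num)]
    congr 1
    rw [show (4:ℝ≥0∞) = ENNReal.ofReal 4 by norm_num,
      ENNReal.ofReal_rpow_of_pos (by norm_num)]
    rw [show (4:ℝ) ^ (1/2:ℝ) = 2 by
      rw [← Real.sqrt_eq_rpow]; rw [show (4:ℝ) = 2^2 by norm_num, Real.sqrt_sq (by norm_num)],
      ENNReal.ofReal_ofNat]
  have hRHS : (ENNReal.ofReal (c1 * c2) *
      ((4 * Nf) ^ (1/2 : ℝ) * (4 * Ng) ^ (1/2 : ℝ))).toReal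
      = c1 * c2 * 4 * L2norm f * L2norm g := by
    rw [hfour, hfour]
    rw [ENNReal.toReal_mul, ENNReal.toReal_mul, ENNReal.toReal_mul, ENNReal.toReal_mul,
      ENNReal.toReal_ofReal (by positivity), ← hL2f, ← hL2g]
    simp only [ENNReal.toReal_ofNat]
    ring
  have hfin : ENNReal.ofReal (c1 * c2) *
      ((4 * Nf) ^ (1/2 : ℝ) * (4 * Ng) ^ (1/2 : ℝ)) ≠ ∞ := by
    apply ENNReal.mul_ne_top ENNReal.ofReal_ne_top
    apply ENNReal.mul_ne_top
    · exact (ENNReal.rpow_lt_top_iff_of_pos (by norm_num : (0:ℝ) < 1/2)).2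
        (by exact ENNReal.mul_lt_top (by norm_num) hNf_lt) |>.ne
    · exact (ENNReal.rpow_lt_top_iff_of_pos (by norm_num : (0:ℝ) < 1/2)).2
        (by exact ENNReal.mul_lt_top (by norm_num) hNg_lt) |>.ne
  -- constant identity
  have hconst : c1 * c2 * 4 = 2 / (Real.pi * Real.sqrt (P1.b * P2.b)) := by
    have hs : Real.sqrt (2 * Real.pi * P1.b) * Real.sqrt (2 * Real.pi * P2.b)
        = 2 * Real.pi * Real.sqrt (P1.b * P2.b) := by
      rw [← Real.sqrt_mul (by positivity)]
      rw [show (2 * Real.pi * P1.b) * (2 * Real.pi * P2.b)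
          = (2 * Real.pi)^2 * (P1.b * P2.b) by ring]
      rw [Real.sqrt_mul (by positivity), Real.sqrt_sq (by positivity)]
    have hπ : (0:ℝ) < Real.pi := Real.pi_pos
    have hsb : (0:ℝ) < Real.sqrt (P1.b * P2.b) := Real.sqrt_pos.2 (by positivity)
    have h1 : (0:ℝ) < Real.sqrt (2 * Real.pi * P1.b) := Real.sqrt_pos.2 (by positivity)
    have h2 : (0:ℝ) < Real.sqrt (2 * Real.pi * P2.b) := Real.sqrt_pos.2 (by positivity)
    rw [hc1, hc2, ← mul_inv, hs]
    rw [eq_div_iff (by positivity)]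
    field_simp
    ring
  -- final chain
  calc ‖WVD P1 P2 f g t u‖
      ≤ (∫⁻ n : ℝ × ℝ, ENNReal.ofReal
        ‖kernelK P1 qi n.1 u.1 * f (t + n / 2) * star (g (t - n / 2)) *
          kernelK P2 qj n.2 u.2‖).toReal := step1
    _ ≤ (ENNReal.ofReal (c1 * c2) *
        ((4 * Nf) ^ (1/2 : ℝ) * (4 * Ng) ^ (1/2 : ℝ))).toReal :=
        ENNReal.toReal_mono hfin step2
    _ = c1 * c2 * 4 * L2norm f * L2norm g := hRHS
    _ = 2 / (Real.pi * Real.sqrt (P1.b * P2.b)) * L2norm f * L2norm g := by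
        rw [hconst]
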